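/- Let A₀, A₁ be 2×2 real matrices with positive determinants. If Tr(A₀)Tr(A₁) - Tr(A₀A₁) < -2√(det(A₀)det(A₁)), then there exists λ ∈ (0,1) such that det((1-λ)A₀ + λA₁) < 0, i.e. A_λ has a positive and a negative real eigenvalue. -/

import Mathlib

theorem stmt_1 (A₀ A₁ : Matrix (Fin 2) (Fin 2) ℝ)
    (h0det : 0 < A₀.det) (h1det : 0 < A₁.det)
    (h : A₀.trace * A₁.trace - (A₀ * A₁).trace < -2 * Real.sqrt (A₀.det * A₁.det)) :
    ∃ l : ℝ, l ∈ Set.Ioo (0:ℝ) 1 ∧ ((1 - l) • A₀ + l • A₁).det < 0 := by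
  set s₀ := Real.sqrt A₀.det with hs₀
  set s₁ := Real.sqrt A₁.det with hs₁
  have hs₀pos : 0 < s₀ := Real.sqrt_pos.mpr h0det
  have hs₁pos : 0 < s₁ := Real.sqrt_pos.mpr h1det
  have hs₀sq : s₀ ^ 2 = A₀.det := Real.sq_sqrt h0det.le
  have hs₁sq : s₁ ^ 2 = A₁.det := Real.sq_sqrt h1det.le
  have hsqrtmul : Real.sqrt (A₀.det * A₁.det) = s₀ * s₁ := by
    rw [Real.sqrt_mul h0det.le]
  set l := s₀ / (s₀ + s₁) with hl
  have hsum : 0 < s₀ + s₁ := by linarith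
  refine ⟨l, ⟨div_pos hs₀pos hsum, (div_lt_one hsum).mpr (by linarith)⟩, ?_⟩
  have key : ((1 - l) • A₀ + l • A₁).det =
      (1 - l)^2 * A₀.det + l * (1 - l) * (A₀.trace * A₁.trace - (A₀ * A₁).trace)
        + l^2 * A₁.det := by
    simp only [Matrix.det_fin_two, Matrix.trace_fin_two, Matrix.mul_apply,
      Matrix.add_apply, Matrix.smul_apply, Fin.sum_univ_two, smul_eq_mul]
    ring
  rw [key]
  have h1l : 1 - l = s₁ / (s₀ + s₁) := by rw [hl]; field_simp; ring
  rw [hsqrtmul] at h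
  have hb : A₀.trace * A₁.trace - (A₀ * A₁).trace < -2 * (s₀ * s₁) := h
  rw [h1l, hl]
  rw [div_pow, div_pow, div_mul_div_comm]
  have hsum2 : 0 < (s₀ + s₁)^2 := by positivity
  rw [div_mul_eq_mul_div, div_mul_eq_mul_div, div_mul_eq_mul_div, ← sq,
    ← add_div, ← add_div, div_neg_iff]
  right
  constructor
  · nlinarith [mul_pos hs₀pos hs₁pos, hs₀sq, hs₁sq]
  · exact hsum2
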